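/- Assume mo ⊆ W × W and that no externally-reading read is a write, i.e. toutR ∩ W = ∅ (this holds in particular when rf ⊆ W × R and R ∩ W = ∅). Then the relation (po_T ∪ rf_T ∪ mo_T) ; fr_T^? is acyclic if and only if the SI happens-before relation si-hb = (po_T ∪ rf_T ∪ mo_T ∪ si-rb)⁺ is irreflexive. (Consequently, an execution is SI-consistent — i.e. satisfies INT and acyclicity of (po_T ∪ rf_T ∪ mo_T) ; fr_T^? — if and only if INT holds and si-hb is irreflexive.) -/

import Mathlib

variable {E : Type*} {TxId : Type*} {Loc : Type*}

/-- Same-transaction relation: both events are transactional with equal transaction ids. -/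
def St (tx : E → Option TxId) : E → E → Prop :=
  fun a b => ∃ t, tx a = some t ∧ tx b = some t

/-- Transaction lifting `r_T := st ; (r \ st) ; st`. -/
def RLift (tx : E → Option TxId) (r : E → E → Prop) : E → E → Prop :=
  fun a b => ∃ c d, St tx a c ∧ r c d ∧ ¬ St tx c d ∧ St tx d b

/-- Reads-before relation `fr := (rf⁻¹ ; mo) \ id`. -/
def Fr (rf mo : E → E → Prop) : E → E → Prop :=
  fun a b => (∃ w, rf w a ∧ mo w b) ∧ a ≠ b

/-- Externally-reading reads: `toutR := codom (rf \ st)`. -/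
def ToutR (tx : E → Option TxId) (rf : E → E → Prop) : Set E :=
  { b | ∃ a, rf a b ∧ ¬ St tx a b }

/-- `si-rb := [toutR] ; fr_T ; [W]`. -/
def SiRb (tx : E → Option TxId) (W : Set E) (rf mo : E → E → Prop) : E → E → Prop :=
  fun a b => a ∈ ToutR tx rf ∧ RLift tx (Fr rf mo) a b ∧ b ∈ W

/-- SI happens-before: `si-hb := (po_T ∪ rf_T ∪ mo_T ∪ si-rb)⁺`. -/
def SiHb (tx : E → Option TxId) (W : Set E) (po rf mo : E → E → Prop) : E → E → Prop :=
  Relation.TransGen (fun a b =>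
    RLift tx po a b ∨ RLift tx rf a b ∨ RLift tx mo a b ∨ SiRb tx W rf mo a b)

/-- Non-transactional events. -/
def NTset (tx : E → Option TxId) : Set E := { e | tx e = none }

/-- `rsi-po := (po \ po_i) ∪ ([W] ; po_i ; [W])`. -/
def RsiPo (tx : E → Option TxId) (W : Set E) (po : E → E → Prop) : E → E → Prop :=
  fun a b => (po a b ∧ ¬ St tx a b) ∨ (a ∈ W ∧ (po a b ∧ St tx a b) ∧ b ∈ W)

/-- `rsi-rf := (rf ; [NT]) ∪ ([NT] ; rf ; st) ∪ rf_T ∪ (mo ; rf)_T`. -/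
def RsiRf (tx : E → Option TxId) (rf mo : E → E → Prop) : E → E → Prop :=
  fun a b =>
    (rf a b ∧ b ∈ NTset tx) ∨
    (a ∈ NTset tx ∧ ∃ c, rf a c ∧ St tx c b) ∨
    RLift tx rf a b ∨
    RLift tx (fun x y => ∃ z, mo x z ∧ rf z y) a b

/-- RSI happens-before: `rsi-hb := (rsi-po ∪ rsi-rf ∪ mo_T ∪ si-rb)⁺`. -/
def RsiHb (tx : E → Option TxId) (W : Set E) (po rf mo : E → E → Prop) : E → E → Prop :=
  Relation.TransGen (fun a b =>
    RsiPo tx W po a b ∨ RsiRf tx rf mo a b ∨ RLift tx mo a b ∨ SiRb tx W rf mo a b)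

/-- Internal consistency axiom: `rf_i ∪ mo_i ∪ fr_i ⊆ po`. -/
def INTax (tx : E → Option TxId) (po rf mo : E → E → Prop) : Prop :=
  ∀ a b, (rf a b ∨ mo a b ∨ Fr rf mo a b) → St tx a b → po a b

/-- Acyclicity: the transitive closure is irreflexive. -/
def Acyclic (r : E → E → Prop) : Prop := ∀ a, ¬ Relation.TransGen r a a

/-- SI-consistency: INT together with acyclicity of `(po_T ∪ rf_T ∪ mo_T) ; fr_T^?`. -/
def SIConsistent (tx : E → Option TxId) (po rf mo : E → E → Prop) : Prop :=
  INTax tx po rf mo ∧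
  Acyclic (fun a c => ∃ b,
    (RLift tx po a b ∨ RLift tx rf a b ∨ RLift tx mo a b) ∧
    (RLift tx (Fr rf mo) b c ∨ b = c))

/-- RSI-consistency: INT together with acyclicity of `rsi-hb|loc ∪ mo ∪ fr`. -/
def RSIConsistent (tx : E → Option TxId) (W : Set E) (loc : E → Loc)
    (po rf mo : E → E → Prop) : Prop :=
  INTax tx po rf mo ∧
  Acyclic (fun a b =>
    (RsiHb tx W po rf mo a b ∧ loc a = loc b) ∨ mo a b ∨ Fr rf mo a b)

namespace Stmt0Aux

variable {E : Type*} {TxId : Type*}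

theorem st_symm {tx : E → Option TxId} {a b : E} (h : St tx a b) : St tx b a := by
  obtain ⟨t, h1, h2⟩ := h; exact ⟨t, h2, h1⟩

theorem st_trans {tx : E → Option TxId} {a b c : E} (h1 : St tx a b) (h2 : St tx b c) :
    St tx a c := by
  obtain ⟨t, ha, hb⟩ := h1
  obtain ⟨s, hb', hc⟩ := h2
  have : t = s := Option.some.inj (hb.symm.trans hb')
  exact ⟨t, ha, this ▸ hc⟩

theorem rlift_left {tx : E → Option TxId} {r : E → E → Prop} {a' a b : E}
    (h : St tx a' a) (hr : RLift tx r a b) : RLift tx r a' b := by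
  obtain ⟨c, d, h1, h2, h3, h4⟩ := hr
  exact ⟨c, d, st_trans h h1, h2, h3, h4⟩

theorem rlift_right {tx : E → Option TxId} {r : E → E → Prop} {a b b' : E}
    (hr : RLift tx r a b) (h : St tx b b') : RLift tx r a b' := by
  obtain ⟨c, d, h1, h2, h3, h4⟩ := hr
  exact ⟨c, d, h1, h2, h3, st_trans h4 h⟩

/-- `A := po_T ∪ rf_T ∪ mo_T`. -/
def Arel (tx : E → Option TxId) (po rf mo : E → E → Prop) : E → E → Prop :=
  fun a b => RLift tx po a b ∨ RLift tx rf a b ∨ RLift tx mo a b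

theorem arel_left {tx : E → Option TxId} {po rf mo : E → E → Prop} {a' a b : E}
    (h : St tx a' a) (hA : Arel tx po rf mo a b) : Arel tx po rf mo a' b := by
  rcases hA with h1 | h1 | h1
  exacts [Or.inl (rlift_left h h1), Or.inr (Or.inl (rlift_left h h1)),
    Or.inr (Or.inr (rlift_left h h1))]

theorem arel_right {tx : E → Option TxId} {po rf mo : E → E → Prop} {a b b' : E}
    (hA : Arel tx po rf mo a b) (h : St tx b b') : Arel tx po rf mo a b' := by
  rcases hA with h1 | h1 | h1
  exacts [Or.inl (rlift_right h1 h), Or.inr (Or.inl (rlift_right h1 h)),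
    Or.inr (Or.inr (rlift_right h1 h))]

/-- `comp := A ; fr_T^?`. -/
def Comp (tx : E → Option TxId) (po rf mo : E → E → Prop) : E → E → Prop :=
  fun a c => ∃ b, Arel tx po rf mo a b ∧ (RLift tx (Fr rf mo) b c ∨ b = c)

/-- `comp' := A ; si-rb^?`. -/
def Comp' (tx : E → Option TxId) (W : Set E) (po rf mo : E → E → Prop) : E → E → Prop :=
  fun a c => ∃ b, Arel tx po rf mo a b ∧ (SiRb tx W rf mo b c ∨ b = c)

/-- Paths ending with an `A` edge. -/
def EndA (tx : E → Option TxId) (W : Set E) (po rf mo : E → E → Prop) : E → E → Prop :=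
  fun a b => ∃ x, Relation.ReflTransGen (Comp' tx W po rf mo) a x ∧ Arel tx po rf mo x b

/-- Paths ending with a `si-rb` edge preceded by an `A` edge. -/
def EndS (tx : E → Option TxId) (W : Set E) (po rf mo : E → E → Prop) : E → E → Prop :=
  fun a b => ∃ x, EndA tx W po rf mo a x ∧ SiRb tx W rf mo x b

theorem genA {tx : E → Option TxId} {W : Set E} {po rf mo : E → E → Prop} {x y : E}
    (h : Arel tx po rf mo x y) :
    RLift tx po x y ∨ RLift tx rf x y ∨ RLift tx mo x y ∨ SiRb tx W rf mo x y := by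
  rcases h with h | h | h
  exacts [Or.inl h, Or.inr (Or.inl h), Or.inr (Or.inr (Or.inl h))]

theorem dir1 {W : Set E} {tx : E → Option TxId} {po rf mo : E → E → Prop}
    (htout : ToutR tx rf ∩ W = ∅)
    (hacyc : Acyclic (Comp tx po rf mo)) :
    Irreflexive (SiHb tx W po rf mo) := by
  have hWt : ∀ x : E, x ∈ ToutR tx rf → x ∈ W → False := by
    intro x h1 h2
    exact Set.eq_empty_iff_forall_notMem.mp htout x ⟨h1, h2⟩
  have hsub : ∀ a b : E, Comp' tx W po rf mo a b → Comp tx po rf mo a b := by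
    rintro a b ⟨m, hm, hc | rfl⟩
    · exact ⟨m, hm, Or.inl hc.2.1⟩
    · exact ⟨m, hm, Or.inr rfl⟩
  have hEArtg : ∀ a b : E, EndA tx W po rf mo a b →
      Relation.ReflTransGen (Comp' tx W po rf mo) a b := by
    rintro a b ⟨x, hx, hA⟩
    exact hx.tail ⟨b, hA, Or.inr rfl⟩
  have hESrtg : ∀ a b : E, EndS tx W po rf mo a b →
      Relation.ReflTransGen (Comp' tx W po rf mo) a b := by
    rintro a b ⟨x, ⟨w, hw, hA⟩, hs⟩
    exact hw.tail ⟨x, hA, Or.inl hs⟩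
  intro a hcy
  have key : ∀ b, SiHb tx W po rf mo a b →
      EndA tx W po rf mo a b ∨ EndS tx W po rf mo a b ∨
      (∃ m, SiRb tx W rf mo a m ∧ (EndA tx W po rf mo m b ∨ EndS tx W po rf mo m b)) ∨
      SiRb tx W rf mo a b := by
    intro b h
    induction h with
    | single h =>
      rcases h with h | h | h | h
      · exact Or.inl ⟨a, Relation.ReflTransGen.refl, Or.inl h⟩
      · exact Or.inl ⟨a, Relation.ReflTransGen.refl, Or.inr (Or.inl h)⟩
      · exact Or.inl ⟨a, Relation.ReflTransGen.refl, Or.inr (Or.inr h)⟩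
      · exact Or.inr (Or.inr (Or.inr h))
    | @tail b c hab hbc ih =>
      have hbc' : Arel tx po rf mo b c ∨ SiRb tx W rf mo b c := by
        rcases hbc with h | h | h | h
        exacts [Or.inl (Or.inl h), Or.inl (Or.inr (Or.inl h)),
          Or.inl (Or.inr (Or.inr h)), Or.inr h]
      rcases hbc' with hA | hS
      · rcases ih with hEA | hES | ⟨m, hm, hEA | hES⟩ | hS0
        · exact Or.inl ⟨b, hEArtg _ _ hEA, hA⟩
        · exact Or.inl ⟨b, hESrtg _ _ hES, hA⟩
        · exact Or.inr (Or.inr (Or.inl ⟨m, hm, Or.inl ⟨b, hEArtg _ _ hEA, hA⟩⟩))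
        · exact Or.inr (Or.inr (Or.inl ⟨m, hm, Or.inl ⟨b, hESrtg _ _ hES, hA⟩⟩))
        · exact Or.inr (Or.inr (Or.inl ⟨b, hS0, Or.inl ⟨b, Relation.ReflTransGen.refl, hA⟩⟩))
      · rcases ih with hEA | hES | ⟨m, hm, hEA | hES⟩ | hS0
        · exact Or.inr (Or.inl ⟨b, hEA, hS⟩)
        · obtain ⟨x, _, hxb⟩ := hES
          exact (hWt b hS.1 hxb.2.2).elim
        · exact Or.inr (Or.inr (Or.inl ⟨m, hm, Or.inr ⟨b, hEA, hS⟩⟩))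
        · obtain ⟨x, _, hxb⟩ := hES
          exact (hWt b hS.1 hxb.2.2).elim
        · exact (hWt b hS.1 hS0.2.2).elim
  rcases key a hcy with hEA | hES | ⟨m, hm, hEA | hES⟩ | hS0
  · obtain ⟨x, hx, hA⟩ := hEA
    exact hacyc a (Relation.TransGen.tail' (Relation.ReflTransGen.mono hsub _ _ hx) ⟨a, hA, Or.inr rfl⟩)
  · obtain ⟨x, ⟨w, hw, hA⟩, hs⟩ := hES
    exact hacyc a (Relation.TransGen.tail' (Relation.ReflTransGen.mono hsub _ _ hw) ⟨x, hA, Or.inl hs.2.1⟩)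
  · obtain ⟨x, hx, hA⟩ := hEA
    exact hacyc m (Relation.TransGen.tail' (Relation.ReflTransGen.mono hsub _ _ hx) ⟨a, hA, Or.inl hm.2.1⟩)
  · obtain ⟨x, _, hs⟩ := hES
    exact hWt a hm.1 hs.2.2
  · exact hWt a hS0.1 hS0.2.2

theorem dir2 {W : Set E} {tx : E → Option TxId} {po rf mo : E → E → Prop}
    (hmoWW : ∀ a b, mo a b → a ∈ W ∧ b ∈ W)
    (hirr : Irreflexive (SiHb tx W po rf mo)) :
    Acyclic (Comp tx po rf mo) := by
  intro a hcy
  have absorbA : ∀ x' x b : E, (x' = x ∨ St tx x' x) → Arel tx po rf mo x b →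
      Arel tx po rf mo x' b := by
    rintro x' x b (rfl | h) hA
    · exact hA
    · exact arel_left h hA
  have stepE : ∀ x y : E, Comp tx po rf mo x y →
      ∃ y', (y' = y ∨ St tx y' y) ∧
        ∀ x', (x' = x ∨ St tx x' x) → SiHb tx W po rf mo x' y' := by
    rintro x y ⟨b, hA, hfr | rfl⟩
    · obtain ⟨p, q, hbp, hfrpq, hnst, hqy⟩ := hfr
      obtain ⟨⟨w, hrfwp, hmowq⟩, hpq⟩ := hfrpq
      have hqW : q ∈ W := (hmoWW w q hmowq).2
      have hqq : St tx q q := ⟨hqy.choose, hqy.choose_spec.1, hqy.choose_spec.1⟩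
      by_cases hst : St tx w p
      · have hnwq : ¬ St tx w q := fun h => hnst (st_trans (st_symm hst) h)
        have hmoT : RLift tx mo b q :=
          ⟨w, q, st_trans hbp (st_symm hst), hmowq, hnwq, hqq⟩
        refine ⟨q, Or.inr hqy, fun x' hx' => ?_⟩
        exact Relation.TransGen.head (genA (absorbA x' x b hx' hA))
          (Relation.TransGen.single (Or.inr (Or.inr (Or.inl hmoT))))
      · have hptout : p ∈ ToutR tx rf := ⟨w, hrfwp, hst⟩
        have hpp : St tx p p := ⟨hbp.choose, hbp.choose_spec.2, hbp.choose_spec.2⟩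
        have hfrT : RLift tx (Fr rf mo) p q :=
          ⟨p, q, hpp, ⟨⟨w, hrfwp, hmowq⟩, hpq⟩, hnst, hqq⟩
        have hsirb : SiRb tx W rf mo p q := ⟨hptout, hfrT, hqW⟩
        refine ⟨q, Or.inr hqy, fun x' hx' => ?_⟩
        have hA' : Arel tx po rf mo x' p := arel_right (absorbA x' x b hx' hA) hbp
        exact Relation.TransGen.head (genA hA')
          (Relation.TransGen.single (Or.inr (Or.inr (Or.inr hsirb))))
    · exact ⟨b, Or.inl rfl, fun x' hx' =>
        Relation.TransGen.single (genA (absorbA x' x b hx' hA))⟩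
  have key : ∀ b, Relation.TransGen (Comp tx po rf mo) a b →
      ∃ y', (y' = b ∨ St tx y' b) ∧
        ∀ x', (x' = a ∨ St tx x' a) → SiHb tx W po rf mo x' y' := by
    intro b h
    induction h with
    | single h => exact stepE _ _ h
    | @tail p q hab hbc ih =>
      obtain ⟨m, hm, hf⟩ := ih
      obtain ⟨y', hy', hg⟩ := stepE p q hbc
      exact ⟨y', hy', fun x' hx' => (hf x' hx').trans (hg m hm)⟩
  obtain ⟨y', hy', hf⟩ := key a hcy
  exact hirr y' (hf y' hy')

end Stmt0Aux

/-- Assuming `mo ⊆ W × W` and `toutR ∩ W = ∅`, the relation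
`(po_T ∪ rf_T ∪ mo_T) ; fr_T^?` is acyclic iff `si-hb` is irreflexive; consequently an
execution is SI-consistent iff INT holds and `si-hb` is irreflexive. -/
theorem stmt0 {E TxId : Type*} (R W : Set E) (tx : E → Option TxId)
    (po rf mo : E → E → Prop)
    (hmoWW : ∀ a b, mo a b → a ∈ W ∧ b ∈ W)
    (htout : ToutR tx rf ∩ W = ∅) :
    (Acyclic (fun a c => ∃ b,
        (RLift tx po a b ∨ RLift tx rf a b ∨ RLift tx mo a b) ∧
        (RLift tx (Fr rf mo) b c ∨ b = c)) ↔
      Irreflexive (SiHb tx W po rf mo)) ∧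
    (SIConsistent tx po rf mo ↔
      (INTax tx po rf mo ∧ Irreflexive (SiHb tx W po rf mo))) := by
  have h1 : Acyclic (fun a c => ∃ b,
      (RLift tx po a b ∨ RLift tx rf a b ∨ RLift tx mo a b) ∧
      (RLift tx (Fr rf mo) b c ∨ b = c)) ↔
      Irreflexive (SiHb tx W po rf mo) := by
    constructor
    · intro h
      exact Stmt0Aux.dir1 htout h
    · intro h
      exact Stmt0Aux.dir2 hmoWW h
  refine ⟨h1, ?_⟩
  unfold SIConsistent
  exact and_congr_right fun _ => h1
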